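/- In the fermionic Gaussianity QRT on n qubits, for each even λ (0 ≤ λ ≤ 2n) the coefficient τ_λ equals C(n, λ/2) / (C(2n, λ) · 2^n), where C denotes the binomial coefficient; for odd λ, the GFD purity of |0⟩^{⊗n} on V_λ vanishes (τ_λ = 0). -/

import Mathlib

/-!
STATEMENT 11: Fermionic Gaussianity QRT on n qubits. Majoranas `c_1,…,c_{2n}` are
defined via Jordan–Wigner; `V_λ` is spanned by normalized products of `λ` distinct
Majoranas, `d_λ = C(2n,λ)`. For even `λ`, `τ_λ = C(n,λ/2)/(C(2n,λ)·2^n)`; for odd `λ`,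
the GFD purity of `|0⟩^{⊗n}` on `V_λ` vanishes.
-/

open Matrix

/-- The four Pauli matrices: I, X, Y, Z. -/
noncomputable def pauli : Fin 4 → Matrix (Fin 2) (Fin 2) ℂ :=
  ![1, !![0, 1; 1, 0], !![0, -Complex.I; Complex.I, 0], !![1, 0; 0, -1]]

/-- The (unnormalized) Pauli string `P_{f 1} ⊗ ⋯ ⊗ P_{f n}`. -/
noncomputable def pauliString {n : ℕ} (f : Fin n → Fin 4) :
    Matrix (Fin n → Fin 2) (Fin n → Fin 2) ℂ :=
  Matrix.of fun i j => ∏ k, pauli (f k) (i k) (j k)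

/-- The projector `|0⟩⟨0|^{⊗n}`. -/
noncomputable def zeroProj (n : ℕ) : Matrix (Fin n → Fin 2) (Fin n → Fin 2) ℂ :=
  Matrix.of fun i j => if i = (fun _ => 0) ∧ j = (fun _ => 0) then 1 else 0

/-- Jordan–Wigner Majorana operator `c_m` (m = 0,…,2n−1):
`c_{2k} = Z^{⊗k} X`, `c_{2k+1} = Z^{⊗k} Y` (identity on the remaining qubits). -/
noncomputable def majorana (n : ℕ) (m : Fin (2 * n)) :
    Matrix (Fin n → Fin 2) (Fin n → Fin 2) ℂ :=
  pauliString (fun q =>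
    if (q : ℕ) < (m : ℕ) / 2 then 3
    else if (q : ℕ) = (m : ℕ) / 2 then (if (m : ℕ) % 2 = 0 then 1 else 2)
    else 0)

/-- Ordered product of the Majoranas indexed by the finite set `S`. -/
noncomputable def majProd (n : ℕ) (S : Finset (Fin (2 * n))) :
    Matrix (Fin n → Fin 2) (Fin n → Fin 2) ℂ :=
  ((S.sort (· ≤ ·)).map (majorana n)).prod

/-- GFD purity of `ρ` on `V_λ` (the span of normalized products of `λ` distinct
Majoranas). -/
noncomputable def PpurF (n : ℕ) (lam : ℕ)
    (ρ : Matrix (Fin n → Fin 2) (Fin n → Fin 2) ℂ) : ℝ :=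
  ∑ S ∈ Finset.univ.filter (fun S : Finset (Fin (2 * n)) => S.card = lam),
    Complex.normSq (((((Real.sqrt (2 ^ n) : ℝ)⁻¹ : ℂ) • majProd n S) * ρ).trace)

/-! ### auxiliary development -/

section aux

lemma listProd_pauliString_entry {n : ℕ} (L : List (Fin n → Fin 4))
    (i j : Fin n → Fin 2) :
    ((L.map pauliString).prod) i j
      = ∏ k, ((L.map (fun f => pauli (f k))).prod) (i k) (j k) := by
  induction L generalizing i j with
  | nil =>
      simp only [List.map_nil, List.prod_nil]
      rw [Matrix.one_apply]
      by_cases h : i = j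
      · subst h; simp [Matrix.one_apply]
      · have : ∃ k, i k ≠ j k := by
          by_contra hc
          push_neg at hc
          exact h (funext hc)
        obtain ⟨k, hk⟩ := this
        rw [if_neg h]
        symm
        apply Finset.prod_eq_zero (Finset.mem_univ k)
        simp [Matrix.one_apply, hk]
  | cons f L ih =>
      simp only [List.map_cons, List.prod_cons]
      rw [Matrix.mul_apply]
      have : ∀ x, (pauliString f) i x * ((L.map pauliString).prod) x j
          = ∏ k, (pauli (f k) (i k) (x k) * ((L.map (fun f => pauli (f k))).prod) (x k) (j k)) := by
        intro x
        rw [ih]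
        simp [pauliString, Finset.prod_mul_distrib]
      simp_rw [this]
      have h2 := Finset.prod_univ_sum (fun _ : Fin n => (Finset.univ : Finset (Fin 2)))
        (fun k b => pauli (f k) (i k) b * ((L.map (fun f => pauli (f k))).prod) b (j k))
      rw [Fintype.piFinset_univ] at h2
      rw [← h2]
      refine Finset.prod_congr rfl fun k _ => ?_
      rw [Matrix.mul_apply]

lemma pauli_col (l : List (Fin 4)) :
    ∃ z : ℂ, Complex.normSq z = 1 ∧ ∀ i : Fin 2,
      ((l.map pauli).prod) i 0
        = if (i : ℕ) = (l.countP (fun a => decide (a = 1 ∨ a = 2))) % 2 then z else 0 := by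
  induction l with
  | nil =>
      refine ⟨1, by simp, fun i => ?_⟩
      fin_cases i <;> simp [Matrix.one_apply]
  | cons a l ih =>
      obtain ⟨z, hz, h⟩ := ih
      set c := l.countP (fun a => decide (a = 1 ∨ a = 2)) with hc
      have key : ∀ i, ((a :: l).map pauli).prod i 0
          = pauli a i ⟨c % 2, Nat.mod_lt _ two_pos⟩ * z := by
        intro i
        simp only [List.map_cons, List.prod_cons]
        rw [Matrix.mul_apply, Fin.sum_univ_two, h 0, h 1]
        rcases Nat.mod_two_eq_zero_or_one c with hp | hp <;>
          simp [hp, Fin.ext_iff]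
      by_cases hA : a = 1 ∨ a = 2
      · have hcnt : ((a :: l).countP (fun a => decide (a = 1 ∨ a = 2))) = c + 1 := by
          rw [List.countP_cons, ← hc]; simp [hA]
        rcases Nat.mod_two_eq_zero_or_one c with hp | hp <;> rcases hA with rfl | rfl <;>
          [ exact ⟨z, hz, fun i => by
              rw [hcnt, key]; fin_cases i <;> simp [pauli, hp, Nat.add_mod, Fin.ext_iff]⟩;
            exact ⟨Complex.I * z, by simp [hz], fun i => by
              rw [hcnt, key]; fin_cases i <;> simp [pauli, hp, Nat.add_mod, Fin.ext_iff]⟩;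
            exact ⟨z, hz, fun i => by
              rw [hcnt, key]; fin_cases i <;> simp [pauli, hp, Nat.add_mod, Fin.ext_iff]⟩;
            exact ⟨-Complex.I * z, by simp [hz], fun i => by
              rw [hcnt, key]; fin_cases i <;> simp [pauli, hp, Nat.add_mod, Fin.ext_iff]⟩ ]
      · have hcnt : ((a :: l).countP (fun a => decide (a = 1 ∨ a = 2))) = c := by
          rw [List.countP_cons, ← hc]; simp [hA]
        have h03 : a = 0 ∨ a = 3 := by
          push_neg at hA
          fin_cases a <;> simp_all
        rcases Nat.mod_two_eq_zero_or_one c with hp | hp <;> rcases h03 with rfl | rfl <;>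
          [ exact ⟨z, hz, fun i => by
              rw [hcnt, key]; fin_cases i <;> simp [pauli, hp, Fin.ext_iff]⟩;
            exact ⟨z, hz, fun i => by
              rw [hcnt, key]; fin_cases i <;> simp [pauli, hp, Fin.ext_iff]⟩;
            exact ⟨z, hz, fun i => by
              rw [hcnt, key]; fin_cases i <;> simp [pauli, hp, Fin.ext_iff]⟩;
            exact ⟨-z, by simp [hz], fun i => by
              rw [hcnt, key]; fin_cases i <;> simp [pauli, hp, Fin.ext_iff]⟩ ]

variable (n : ℕ)

def pairIdx (m : Fin (2 * n)) : Fin n := ⟨(m : ℕ) / 2, by omega⟩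

def d0 (k : Fin n) : Fin (2 * n) := ⟨2 * k, by omega⟩
def d1 (k : Fin n) : Fin (2 * n) := ⟨2 * k + 1, by omega⟩

lemma pairIdx_d0 (k : Fin n) : pairIdx n (d0 n k) = k := by
  simp only [pairIdx, d0, Fin.ext_iff]; omega

lemma mem_pair_iff (k : Fin n) (m : Fin (2 * n)) :
    m ∈ ({d0 n k, d1 n k} : Finset (Fin (2 * n))) ↔ pairIdx n m = k := by
  simp only [Finset.mem_insert, Finset.mem_singleton, d0, d1, pairIdx, Fin.ext_iff]
  omega

lemma card_pair (k : Fin n) : ({d0 n k, d1 n k} : Finset (Fin (2*n))).card = 2 := by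
  rw [Finset.card_insert_of_notMem, Finset.card_singleton]
  simp [d0, d1, Fin.ext_iff]

def phi (T : Finset (Fin n)) : Finset (Fin (2 * n)) :=
  T.biUnion (fun k => {d0 n k, d1 n k})

lemma mem_phi {T : Finset (Fin n)} {m : Fin (2 * n)} :
    m ∈ phi n T ↔ pairIdx n m ∈ T := by
  simp only [phi, Finset.mem_biUnion]
  constructor
  · rintro ⟨k, hk, hm⟩
    rwa [(mem_pair_iff n k m).mp hm]
  · intro h
    exact ⟨pairIdx n m, h, (mem_pair_iff n _ m).mpr rfl⟩

lemma card_phi (T : Finset (Fin n)) : (phi n T).card = 2 * T.card := by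
  rw [phi, Finset.card_biUnion]
  · rw [Finset.sum_congr rfl (fun k _ => card_pair n k), Finset.sum_const,
      smul_eq_mul, mul_comm]
  · intro a _ b _ hab
    simp only [Finset.disjoint_left]
    intro m hma hmb
    rw [mem_pair_iff] at hma hmb
    exact hab (hma ▸ hmb ▸ rfl)

lemma fiber_subset (S : Finset (Fin (2 * n))) (k : Fin n) :
    S.filter (fun m => pairIdx n m = k) ⊆ {d0 n k, d1 n k} := by
  intro m hm
  exact (mem_pair_iff n k m).mpr (Finset.mem_filter.mp hm).2

def paired (S : Finset (Fin (2 * n))) : Prop :=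
  ∀ k : Fin n, (S.filter (fun m => pairIdx n m = k)).card % 2 = 0

instance : DecidablePred (paired n) := fun _ => by unfold paired; infer_instance

lemma card_eq_sum_fibers (S : Finset (Fin (2 * n))) :
    S.card = ∑ k : Fin n, (S.filter (fun m => pairIdx n m = k)).card :=
  Finset.card_eq_sum_card_fiberwise (fun _ _ => Finset.mem_univ _)

lemma paired_even_card {S : Finset (Fin (2 * n))} (h : paired n S) : S.card % 2 = 0 := by
  rw [card_eq_sum_fibers n S, Finset.sum_nat_mod,
    Finset.sum_congr rfl (fun k _ => h k)]
  simp

lemma paired_iff_phi {S : Finset (Fin (2 * n))} (h : paired n S) :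
    S = phi n (S.image (pairIdx n)) := by
  ext m
  rw [mem_phi, Finset.mem_image]
  constructor
  · exact fun hm => ⟨m, hm, rfl⟩
  · rintro ⟨m', hm', hmm⟩
    set k := pairIdx n m with hk
    have hne : m' ∈ S.filter (fun x => pairIdx n x = k) :=
      Finset.mem_filter.mpr ⟨hm', hmm⟩
    have h1 : 1 ≤ (S.filter (fun x => pairIdx n x = k)).card :=
      Finset.card_pos.mpr ⟨m', hne⟩
    have h2 : (S.filter (fun x => pairIdx n x = k)).card ≤ 2 := by
      have := Finset.card_le_card (fiber_subset n S k)
      rwa [card_pair] at this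
    have heq : (S.filter (fun x => pairIdx n x = k)).card = 2 := by
      have := h k; omega
    have hfull : (S.filter (fun x => pairIdx n x = k)) = {d0 n k, d1 n k} :=
      Finset.eq_of_subset_of_card_le (fiber_subset n S k) (by rw [card_pair, heq])
    have hmem : m ∈ ({d0 n k, d1 n k} : Finset _) := (mem_pair_iff n k m).mpr rfl
    rw [← hfull] at hmem
    exact (Finset.mem_filter.mp hmem).1

lemma paired_phi (T : Finset (Fin n)) : paired n (phi n T) := by
  intro k
  by_cases hk : k ∈ T
  · have : (phi n T).filter (fun m => pairIdx n m = k) = {d0 n k, d1 n k} := by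
      ext m
      rw [Finset.mem_filter, mem_phi, mem_pair_iff]
      constructor
      · exact fun h => h.2
      · exact fun h => ⟨h ▸ hk, h⟩
    rw [this, card_pair]
  · have : (phi n T).filter (fun m => pairIdx n m = k) = ∅ := by
      ext m
      rw [Finset.mem_filter, mem_phi]
      simp only [Finset.notMem_empty, iff_false, not_and]
      intro h1 h2
      exact hk (h2 ▸ h1)
    rw [this]; rfl

lemma phi_injective : Function.Injective (phi n) := by
  intro T T' h
  ext k
  have h0 : d0 n k ∈ phi n T ↔ d0 n k ∈ phi n T' := by rw [h]
  rw [mem_phi, mem_phi, pairIdx_d0] at h0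
  exact h0

lemma count_paired (lam : ℕ) :
    ((Finset.univ : Finset (Finset (Fin (2*n)))).filter
        (fun S => S.card = lam ∧ paired n S)).card
      = if lam % 2 = 0 then n.choose (lam / 2) else 0 := by
  by_cases hlam : lam % 2 = 0
  · rw [if_pos hlam]
    have hset : ((Finset.univ : Finset (Finset (Fin (2*n)))).filter
        (fun S => S.card = lam ∧ paired n S))
        = Finset.image (phi n) (Finset.powersetCard (lam / 2) Finset.univ) := by
      ext S
      simp only [Finset.mem_filter, Finset.mem_univ, true_and, Finset.mem_image,
        Finset.mem_powersetCard]
      constructor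
      · rintro ⟨hcard, hpair⟩
        refine ⟨S.image (pairIdx n), ⟨Finset.subset_univ _, ?_⟩, (paired_iff_phi n hpair).symm⟩
        have := card_phi n (S.image (pairIdx n))
        rw [← paired_iff_phi n hpair] at this
        omega
      · rintro ⟨T, ⟨_, hT⟩, rfl⟩
        refine ⟨?_, paired_phi n T⟩
        rw [card_phi, hT]; omega
    rw [hset, Finset.card_image_of_injective _ (phi_injective n),
      Finset.card_powersetCard, Finset.card_univ, Fintype.card_fin]
  · rw [if_neg hlam, Finset.card_eq_zero, Finset.filter_eq_empty_iff]
    intro S _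
    rintro ⟨hcard, hpair⟩
    exact hlam (hcard ▸ paired_even_card n hpair)

/-! ### bridging lemmas -/

/-- Pauli label of `majorana n m` at qubit `k`. -/
def jw (m : Fin (2 * n)) (k : Fin n) : Fin 4 :=
  if (k : ℕ) < (m : ℕ) / 2 then 3
  else if (k : ℕ) = (m : ℕ) / 2 then (if (m : ℕ) % 2 = 0 then 1 else 2)
  else 0

lemma majorana_eq (m : Fin (2 * n)) : majorana n m = pauliString (jw n m) := rfl

lemma jw_xy (m : Fin (2 * n)) (k : Fin n) :
    (jw n m k = 1 ∨ jw n m k = 2) ↔ pairIdx n m = k := by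
  unfold jw
  have : (pairIdx n m = k) ↔ ((k : ℕ) = (m : ℕ) / 2) := by
    simp [pairIdx, Fin.ext_iff]; omega
  rw [this]
  split_ifs with h1 h2 h3 <;> simp_all <;> omega

lemma trace_smul_mul_zeroProj {n : ℕ} (c : ℂ)
    (A : Matrix (Fin n → Fin 2) (Fin n → Fin 2) ℂ) :
    ((c • A) * zeroProj n).trace = c * A (fun _ => 0) (fun _ => 0) := by
  rw [Matrix.trace]
  simp only [Matrix.diag, Matrix.mul_apply, zeroProj, Matrix.smul_apply, Matrix.of_apply,
    smul_eq_mul, ite_and]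
  rw [Finset.sum_comm]
  simp [Finset.sum_ite_eq', mul_ite]

lemma normSq_majProd (S : Finset (Fin (2 * n))) :
    Complex.normSq (majProd n S (fun _ => 0) (fun _ => 0))
      = if paired n S then 1 else 0 := by
  have hmap : (S.sort (· ≤ ·)).map (majorana n)
      = ((S.sort (· ≤ ·)).map (jw n)).map pauliString := by
    rw [List.map_map]; rfl
  have hentry : majProd n S (fun _ => 0) (fun _ => 0)
      = ∏ k : Fin n, ((((S.sort (· ≤ ·)).map (fun m => jw n m k)).map pauli).prod) 0 0 := by
    rw [majProd, hmap, listProd_pauliString_entry]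
    refine Finset.prod_congr rfl fun k _ => ?_
    rw [List.map_map, List.map_map]
    rfl
  have hcnt : ∀ k : Fin n,
      ((S.sort (· ≤ ·)).map (fun m => jw n m k)).countP (fun a => decide (a = 1 ∨ a = 2))
        = (S.filter (fun m => pairIdx n m = k)).card := by
    intro k
    rw [List.countP_map]
    have hrw : ((S.sort (· ≤ ·)).countP
          (fun m => decide (jw n m k = 1 ∨ jw n m k = 2)))
        = ((S.sort (· ≤ ·)).countP (fun m => decide (pairIdx n m = k))) := by
      apply List.countP_congr
      intro m _
      simpa using jw_xy n m k
    rw [show ((fun a => decide (a = 1 ∨ a = 2)) ∘ fun m => jw n m k)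
        = fun m => decide (jw n m k = 1 ∨ jw n m k = 2) from rfl, hrw]
    have hperm := (Finset.sort_perm_toList (r := (· ≤ ·)) (s := S)).countP_eq
      (fun m => decide (pairIdx n m = k))
    rw [hperm]
    have h1 : List.countP (fun m => decide (pairIdx n m = k)) S.toList
        = Multiset.countP (fun m => pairIdx n m = k) S.val := by
      rw [← Finset.coe_toList S, Multiset.coe_countP]
    rw [h1, Multiset.countP_eq_card_filter]
    rw [Finset.card, Finset.filter_val]
  rw [hentry, map_prod Complex.normSq]
  by_cases hp : paired n S
  · rw [if_pos hp]
    apply Finset.prod_eq_one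
    intro k _
    obtain ⟨z, hz, h⟩ := pauli_col ((S.sort (· ≤ ·)).map (fun m => jw n m k))
    rw [h 0, hcnt k]
    have := hp k
    simp [this, hz]
  · rw [if_neg hp]
    rw [paired] at hp
    push_neg at hp
    obtain ⟨k, hk⟩ := hp
    apply Finset.prod_eq_zero (Finset.mem_univ k)
    obtain ⟨z, hz, h⟩ := pauli_col ((S.sort (· ≤ ·)).map (fun m => jw n m k))
    rw [h 0, hcnt k]
    have : (S.filter (fun m => pairIdx n m = k)).card % 2 = 1 := by omega
    simp [this]

end aux

lemma PpurF_zeroProj (n lam : ℕ) :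
    PpurF n lam (zeroProj n)
      = (if lam % 2 = 0 then (n.choose (lam / 2) : ℝ) else 0) / 2 ^ n := by
  unfold PpurF
  have hterm : ∀ S ∈ Finset.univ.filter (fun S : Finset (Fin (2 * n)) => S.card = lam),
      Complex.normSq (((((Real.sqrt (2 ^ n) : ℝ)⁻¹ : ℂ) • majProd n S) * zeroProj n).trace)
        = ((2:ℝ) ^ n)⁻¹ * (if paired n S then 1 else 0) := by
    intro S _
    rw [trace_smul_mul_zeroProj, _root_.map_mul, normSq_majProd]
    congr 1
    rw [map_inv₀, Complex.normSq_ofReal, Real.mul_self_sqrt (by positivity)]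
  rw [Finset.sum_congr rfl hterm, ← Finset.mul_sum, Finset.sum_boole,
    Finset.filter_filter]
  have := count_paired n lam
  rw [this]
  rcases Nat.mod_two_eq_zero_or_one lam with h | h <;> simp [h] <;> ring

theorem stmt11 (n : ℕ) (lam : ℕ) (hlam : lam ≤ 2 * n) :
    (Even lam →
      PpurF n lam (zeroProj n) / (Nat.choose (2 * n) lam : ℝ)
        = (Nat.choose n (lam / 2) : ℝ) / ((Nat.choose (2 * n) lam : ℝ) * 2 ^ n)) ∧
    (¬ Even lam → PpurF n lam (zeroProj n) = 0) := by
  constructor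
  · intro he
    rw [PpurF_zeroProj, if_pos (Nat.even_iff.mp he)]
    have hc : (0:ℝ) < (Nat.choose (2 * n) lam : ℝ) := by
      exact_mod_cast Nat.choose_pos hlam
    have h2 : (0:ℝ) < 2 ^ n := by positivity
    field_simp
  · intro ho
    rw [PpurF_zeroProj, if_neg (by rwa [← Nat.even_iff])]
    simp
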